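/- Let G = (S, 𝓕) be a greedoid and w : 𝓕 → ℝ an objective function, and suppose condition (1) is violated: there exist A ⊆ B with A ∈ 𝓕, A ∪ {x} ∈ 𝓕, B a base of G, x ∈ S \ B, such that w(A ∪ {x}) ≥ w(A ∪ {u}) for every u ∈ Γ(A), yet for every y ∈ B \ A with (B \ {y}) ∪ {x} a base one has w((B \ {y}) ∪ {x}) < w(B). Then there exists a minor H of G (obtained by deleting a subset Y of the ground set and contracting a feasible set, with the objective function modified accordingly) on which some greedy base for maximizing the induced objective w_H is not a base of maximum w_H-value. -/

import Mathlib

open Finset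

variable {α : Type*} [DecidableEq α] [Fintype α]

/-- `X` is subfeasible: contained in some feasible set. -/
def Subfeasible (F : Set (Finset α)) (X : Finset α) : Prop :=
  ∃ Y ∈ F, X ⊆ Y

/-- Greedoid axioms: `∅` is feasible, and the exchange property. -/
def IsGreedoid (F : Set (Finset α)) : Prop :=
  (∅ : Finset α) ∈ F ∧
    ∀ X ∈ F, ∀ Y ∈ F, X.card < Y.card → ∃ y ∈ Y, y ∉ X ∧ insert y X ∈ F

/-- Local union property. -/
def LocalUnion (F : Set (Finset α)) : Prop :=
  ∀ A ∈ F, ∀ B ∈ F, Subfeasible F (A ∪ B) → A ∪ B ∈ F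

/-- Local intersection property. -/
def LocalInter (F : Set (Finset α)) : Prop :=
  ∀ A ∈ F, ∀ B ∈ F, Subfeasible F (A ∪ B) → A ∩ B ∈ F

/-- Local forest property. -/
def LocalForest (F : Set (Finset α)) : Prop :=
  ∀ A ∈ F, ∀ x y z : α,
    insert x A ∈ F → insert y A ∈ F → insert x (insert y A) ∈ F →
      insert z (insert x (insert y A)) ∈ F →
      insert z (insert x A) ∈ F ∨ insert z (insert y A) ∈ F

/-- The rank function of a greedoid: max cardinality of a feasible subset. -/
noncomputable def grank (F : Set (Finset α)) (A : Finset α) : ℕ :=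
  sSup {n : ℕ | ∃ X ∈ F, X ⊆ A ∧ X.card = n}

/-- A base: a feasible set of maximum size. -/
def IsBase (F : Set (Finset α)) (B : Finset α) : Prop :=
  B ∈ F ∧ ∀ C ∈ F, C.card ≤ B.card

/-- The set of continuations of a feasible set `A`. -/
def Gamma (F : Set (Finset α)) (A : Finset α) : Set α :=
  {x | x ∉ A ∧ insert x A ∈ F}

/-- `P` is the `x`-path in `A`: the unique inclusion-minimal feasible subset
of `A` containing `x`. -/
def IsPathIn (F : Set (Finset α)) (A : Finset α) (x : α) (P : Finset α) : Prop :=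
  P ∈ F ∧ P ⊆ A ∧ x ∈ P ∧ ∀ Q ∈ F, Q ⊆ A → x ∈ Q → P ⊆ Q

/-- `P` is a path. -/
def IsPath (F : Set (Finset α)) (P : Finset α) : Prop :=
  ∃ A ∈ F, ∃ x ∈ A, IsPathIn F A x P

/-- `l` is a feasible ordering (of the set of its elements): every prefix is feasible. -/
def FeasibleOrdering (F : Set (Finset α)) (l : List α) : Prop :=
  l.Nodup ∧ ∀ i : ℕ, (l.take i).toFinset ∈ F

/-- `B` is a greedy base for maximizing `w`. -/
def GreedyMaxBase (F : Set (Finset α)) (w : Finset α → ℝ) (B : Finset α) : Prop :=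
  IsBase F B ∧ ∃ l : List α, FeasibleOrdering F l ∧ l.toFinset = B ∧
    ∀ (i : ℕ) (hi : i < l.length), ∀ y ∈ Gamma F (l.take i).toFinset,
      w (insert y (l.take i).toFinset) ≤ w (insert (l.get ⟨i, hi⟩) (l.take i).toFinset)

/-- `B` is a greedy base for minimizing `w`. -/
def GreedyMinBase (F : Set (Finset α)) (w : Finset α → ℝ) (B : Finset α) : Prop :=
  IsBase F B ∧ ∃ l : List α, FeasibleOrdering F l ∧ l.toFinset = B ∧
    ∀ (i : ℕ) (hi : i < l.length), ∀ y ∈ Gamma F (l.take i).toFinset,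
      w (insert (l.get ⟨i, hi⟩) (l.take i).toFinset) ≤ w (insert y (l.take i).toFinset)

/-- The shadow vector of a feasible set `B`: `sh_B(x) = |B| - r(B \ {x})`. -/
noncomputable def shVec (F : Set (Finset α)) (B : Finset α) : α → ℝ :=
  fun x => (B.card : ℝ) - (grank F (B.erase x) : ℝ)

/-- If condition (1) is violated for a greedoid then it has a minor on which
some greedy base is not optimal. -/
lemma minor_isGreedoid (F : Set (Finset α)) (hG : IsGreedoid F) (X g : Finset α)
    (hX : X ∈ F) (hdisj : Disjoint g X) :
    IsGreedoid {Z : Finset α | Z ⊆ g ∧ Z ∪ X ∈ F} := by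
  constructor
  · exact ⟨empty_subset _, by simpa using hX⟩
  · rintro Z₁ ⟨hZ₁g, hZ₁⟩ Z₂ ⟨hZ₂g, hZ₂⟩ hcard
    have d₁ : Disjoint Z₁ X := hdisj.mono_left hZ₁g
    have d₂ : Disjoint Z₂ X := hdisj.mono_left hZ₂g
    have hc : (Z₁ ∪ X).card < (Z₂ ∪ X).card := by
      rw [card_union_of_disjoint d₁, card_union_of_disjoint d₂]; omega
    obtain ⟨y, hy, hyn, hins⟩ := hG.2 _ hZ₁ _ hZ₂ hc
    have hyX : y ∉ X := fun h => hyn (mem_union_right _ h)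
    have hyZ₂ : y ∈ Z₂ := (mem_union.1 hy).resolve_right hyX
    refine ⟨y, hyZ₂, fun h => hyn (mem_union_left _ h), ?_, ?_⟩
    · exact insert_subset (hZ₂g hyZ₂) hZ₁g
    · rwa [insert_union]

lemma exists_greedy_from (H : Set (Finset α)) (hH : IsGreedoid H) (w : Finset α → ℝ) :
    ∀ (n : ℕ) (l : List α), Fintype.card α - l.length ≤ n →
      FeasibleOrdering H l →
      (∀ (i : ℕ) (hi : i < l.length), ∀ y ∈ Gamma H (l.take i).toFinset,
        w (insert y (l.take i).toFinset) ≤ w (insert (l.get ⟨i, hi⟩) (l.take i).toFinset)) →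
      ∃ l' : List α, l <+: l' ∧ GreedyMaxBase H w l'.toFinset := by
  intro n
  induction n with
  | zero =>
    intro l hn hfo hgr
    have hPH : l.toFinset ∈ H := by
      have := hfo.2 l.length
      simpa using this
    have hbase : IsBase H l.toFinset := by
      refine ⟨hPH, fun C _hC => ?_⟩
      have h1 : C.card ≤ Fintype.card α := card_le_univ C
      have h2 : l.toFinset.card = l.length := List.toFinset_card_of_nodup hfo.1
      omega
    exact ⟨l, List.prefix_refl l, hbase, l, hfo, rfl, hgr⟩
  | succ n ih =>
    intro l hn hfo hgr
    have hPH : l.toFinset ∈ H := by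
      have := hfo.2 l.length
      simpa using this
    by_cases hbase : IsBase H l.toFinset
    · exact ⟨l, List.prefix_refl l, hbase, l, hfo, rfl, hgr⟩
    · have hex : ∃ C ∈ H, l.toFinset.card < C.card := by
        by_contra h
        push_neg at h
        exact hbase ⟨hPH, fun C hC => h C hC⟩
      obtain ⟨C, hC, hlt⟩ := hex
      obtain ⟨z, _hzC, hzP, hinsz⟩ := hH.2 _ hPH _ hC hlt
      have hzΓ : z ∈ Gamma H l.toFinset := ⟨hzP, hinsz⟩
      set Γ : Finset α := (Set.toFinite (Gamma H l.toFinset)).toFinset with hΓdef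
      have hzΓ' : z ∈ Γ := (Set.Finite.mem_toFinset _).2 hzΓ
      obtain ⟨m, hmΓ, hmax⟩ := Finset.exists_max_image Γ
        (fun y => w (insert y l.toFinset)) ⟨z, hzΓ'⟩
      have hmG : m ∈ Gamma H l.toFinset := (Set.Finite.mem_toFinset _).1 hmΓ
      obtain ⟨hmP, hmH⟩ := hmG
      have hml : m ∉ l := fun h => hmP (List.mem_toFinset.2 h)
      have hnodup2 : (l ++ [m]).Nodup := by
        rw [List.nodup_append]
        exact ⟨hfo.1, List.nodup_singleton m, by
          intro a ha b hb hab
          rw [List.mem_singleton] at hb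
          subst hb; subst hab
          exact hml ha⟩
      have htf2 : (l ++ [m]).toFinset = insert m l.toFinset := by
        ext z; simp only [List.mem_toFinset, List.mem_append, List.mem_singleton, mem_insert]; tauto
      have hfo2 : FeasibleOrdering H (l ++ [m]) := by
        refine ⟨hnodup2, fun i => ?_⟩
        rcases le_or_gt i l.length with h | h
        · rw [List.take_append_of_le_length h]
          exact hfo.2 i
        · rw [List.take_of_length_le (by simp; omega)]
          rw [htf2]; exact hmH
      have hgr2 : ∀ (i : ℕ) (hi : i < (l ++ [m]).length),
          ∀ y ∈ Gamma H ((l ++ [m]).take i).toFinset,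
          w (insert y ((l ++ [m]).take i).toFinset) ≤
            w (insert ((l ++ [m]).get ⟨i, hi⟩) ((l ++ [m]).take i).toFinset) := by
        intro i hi y hy
        rcases lt_or_eq_of_le (Nat.lt_succ_iff.1 (by simpa using hi)) with h | h
        · have ht : (l ++ [m]).take i = l.take i := List.take_append_of_le_length h.le
          have hg : (l ++ [m]).get ⟨i, hi⟩ = l.get ⟨i, h⟩ := by
            simp [List.get_eq_getElem, List.getElem_append_left h]
          rw [ht] at hy ⊢
          rw [hg]
          exact hgr i h y hy
        · subst h
          have ht : (l ++ [m]).take l.length = l := by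
            rw [List.take_append_of_le_length le_rfl, List.take_length]
          have hg : (l ++ [m]).get ⟨l.length, hi⟩ = m :=
            by simp
          rw [ht] at hy ⊢
          rw [hg]
          exact hmax y ((Set.Finite.mem_toFinset _).2 hy)
      have hlen : (l ++ [m]).length ≤ Fintype.card α := hnodup2.length_le_card
      have hn2 : Fintype.card α - (l ++ [m]).length ≤ n := by
        simp only [List.length_append, List.length_singleton] at *
        omega
      obtain ⟨l', hpre, hgb⟩ := ih (l ++ [m]) hn2 hfo2 hgr2
      exact ⟨l', (List.prefix_append l [m]).trans hpre, hgb⟩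


theorem statement15 (F : Set (Finset α)) (hG : IsGreedoid F) (w : Finset α → ℝ)
    (A B : Finset α) (x : α)
    (hA : A ∈ F) (hAx : insert x A ∈ F) (hB : IsBase F B) (hAB : A ⊆ B) (hx : x ∉ B)
    (hgr : ∀ u ∈ Gamma F A, w (insert u A) ≤ w (insert x A))
    (hviol : ∀ y ∈ B, y ∉ A → IsBase F (insert x (B.erase y)) →
      w (insert x (B.erase y)) < w B) :
    -- There is a minor `H = (G \ Y) / X` (delete `Y`, contract the feasible set `X`,
    -- objective `w_H(Z) = w(Z ∪ X)`) on which some greedy base is not optimal: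
    ∃ Y X : Finset α, X ∈ F ∧ Disjoint X Y ∧
      ∃ Bg : Finset α,
        GreedyMaxBase {Z : Finset α | Z ⊆ ((Finset.univ \ Y) \ X) ∧ Z ∪ X ∈ F}
          (fun Z => w (Z ∪ X)) Bg ∧
        ∃ B' : Finset α,
          IsBase {Z : Finset α | Z ⊆ ((Finset.univ \ Y) \ X) ∧ Z ∪ X ∈ F} B' ∧
          w (Bg ∪ X) < w (B' ∪ X) := by
    classical
    set Y : Finset α := univ \ insert x B with hYdef
    set g : Finset α := (univ \ Y) \ A with hgdef
    have hgeq : g = insert x B \ A := by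
      simp [hgdef, hYdef, sdiff_sdiff_right_self, inf_eq_inter, univ_inter]
    set H : Set (Finset α) := {Z : Finset α | Z ⊆ g ∧ Z ∪ A ∈ F} with hHdef
    have hxA : x ∉ A := fun h => hx (hAB h)
    have hgA : Disjoint g A := sdiff_disjoint
    have hH : IsGreedoid H := minor_isGreedoid F hG A g hA hgA
    have hxg : x ∈ g := by rw [hgeq]; exact mem_sdiff.2 ⟨mem_insert_self x B, hxA⟩
    -- the starting list [x]
    have hfo1 : FeasibleOrdering H [x] := by
      refine ⟨List.nodup_singleton x, fun i => ?_⟩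
      match i with
      | 0 => exact ⟨empty_subset _, by simpa using hA⟩
      | (n+1) =>
        refine ⟨by simpa using hxg, ?_⟩
        simp only [List.take_succ_cons, List.take_nil, List.toFinset_cons, List.toFinset_nil]
        simpa using hAx
    have hgr1 : ∀ (i : ℕ) (hi : i < ([x] : List α).length),
        ∀ y ∈ Gamma H (([x] : List α).take i).toFinset,
        (fun Z => w (Z ∪ A)) (insert y (([x] : List α).take i).toFinset) ≤
          (fun Z => w (Z ∪ A)) (insert (([x] : List α).get ⟨i, hi⟩)
            (([x] : List α).take i).toFinset) := by
      intro i hi y hy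
      have hi0 : i = 0 := Nat.lt_one_iff.1 (by simpa using hi)
      subst hi0
      simp only [List.take_zero, List.toFinset_nil] at hy ⊢
      obtain ⟨-, hyH⟩ := hy
      obtain ⟨hyg, hyF⟩ := hyH
      have hyg' : y ∈ g := hyg (by simp)
      have hyA : y ∉ A := fun h => (disjoint_left.1 hgA) hyg' h
      have h1 : insert y (∅ : Finset α) ∪ A = insert y A := by
        ext z; simp
      have h2 : insert x (∅ : Finset α) ∪ A = insert x A := by
        ext z; simp
      simp only [List.get]
      rw [h1, h2]
      refine hgr y ⟨hyA, ?_⟩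
      rwa [h1] at hyF
    obtain ⟨l', hpre, hgb⟩ := exists_greedy_from H hH (fun Z => w (Z ∪ A))
      (Fintype.card α) [x] (by omega) hfo1 hgr1
    set Bg : Finset α := l'.toFinset with hBgdef
    have hxBg : x ∈ Bg := List.mem_toFinset.2 (hpre.subset (by simp))
    obtain ⟨hBgH, hBgsub⟩ := hgb.1.1
    -- B \ A is a base of H
    have hBA_H : (B \ A) ∈ H := by
      refine ⟨?_, by rw [sdiff_union_of_subset hAB]; exact hB.1⟩
      rw [hgeq]
      exact sdiff_subset_sdiff (subset_insert x B) (Subset.refl A)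
    have hcard_le : ∀ C ∈ H, C.card ≤ (B \ A).card := by
      rintro C ⟨hCg, hCF⟩
      have hdC : Disjoint C A := hgA.mono_left hCg
      have h1 : (C ∪ A).card = C.card + A.card := card_union_of_disjoint hdC
      have h2 : (C ∪ A).card ≤ B.card := hB.2 _ hCF
      have h3 : (B \ A).card = B.card - A.card := card_sdiff_of_subset hAB
      have h4 : A.card ≤ B.card := card_le_card hAB
      omega
    have hBA_base : IsBase H (B \ A) := ⟨hBA_H, hcard_le⟩
    -- cardinalities
    have hBgcard : Bg.card = (B \ A).card :=
      le_antisymm (hcard_le _ ⟨hBgH, hBgsub⟩) (hgb.1.2 _ hBA_H)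
    have hdBg : Disjoint Bg A := hgA.mono_left hBgH
    have hcardBgA : (Bg ∪ A).card = B.card := by
      rw [card_union_of_disjoint hdBg, hBgcard, card_sdiff_of_subset hAB]
      have := card_le_card hAB
      omega
    have hBgAsub : Bg ∪ A ⊆ insert x B := by
      refine union_subset ?_ (hAB.trans (subset_insert x B))
      rw [hgeq] at hBgH
      exact hBgH.trans (sdiff_subset)
    have hxBgA : x ∈ Bg ∪ A := mem_union_left _ hxBg
    -- find the missing element y
    have hcard1 : (insert x B \ (Bg ∪ A)).card = 1 := by
      rw [card_sdiff_of_subset hBgAsub, card_insert_of_notMem hx, hcardBgA]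
      omega
    obtain ⟨y, hy⟩ := card_eq_one.1 hcard1
    have hyB : y ∈ B ∧ y ∉ Bg ∪ A := by
      have : y ∈ insert x B \ (Bg ∪ A) := hy ▸ mem_singleton_self y
      rw [mem_sdiff] at this
      rcases mem_insert.1 this.1 with h | h
      · exact absurd (h ▸ hxBgA) this.2
      · exact ⟨h, this.2⟩
    have hyA : y ∉ A := fun h => hyB.2 (mem_union_right _ h)
    -- Bg ∪ A = insert x (B.erase y)
    have hBgAeq : Bg ∪ A = insert x (B.erase y) := by
      apply Finset.eq_of_subset_of_card_le
      · intro z hz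
        rcases mem_insert.1 (hBgAsub hz) with h | h
        · exact h ▸ mem_insert_self _ _
        · refine mem_insert_of_mem (mem_erase.2 ⟨?_, h⟩)
          rintro rfl
          exact hyB.2 hz
      · rw [card_insert_of_notMem (fun h => hx (erase_subset y B h)),
          card_erase_of_mem hyB.1, hcardBgA]
        have : 1 ≤ B.card := card_pos.2 ⟨y, hyB.1⟩
        omega
    have hBgAF : Bg ∪ A ∈ F := hBgsub
    have hXbase : IsBase F (insert x (B.erase y)) := by
      refine ⟨hBgAeq ▸ hBgAF, fun C hC => ?_⟩
      have := hB.2 C hC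
      rw [← hBgAeq, hcardBgA]
      exact this
    have hlt : w (insert x (B.erase y)) < w B := hviol y hyB.1 hyA hXbase
    refine ⟨Y, A, hA, ?_, Bg, hgb, B \ A, hBA_base, ?_⟩
    · rw [hYdef]
      exact disjoint_left.2 fun a ha h => (mem_sdiff.1 h).2 (mem_insert_of_mem (hAB ha))
    · rw [hBgAeq, sdiff_union_of_subset hAB]
      exact hlt
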